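/- Let f be a homogeneous Darboux polynomial of degree m of the three-dimensional Lotka–Volterra system with cofactor α·x1 + β·x2 + γ·x3. If γ ≠ 0, then the coefficient of x3^m in f is zero; equivalently, f can be written as f = x1·φ + x2·ψ for some polynomials φ, ψ. -/

import Mathlib

open MvPolynomial

/-- Lie derivative along the 3D Lotka-Volterra vector field with parameters r, s, t. -/
noncomputable def LV (r s t : ℝ) (f : MvPolynomial (Fin 3) ℝ) : MvPolynomial (Fin 3) ℝ :=
  X 0 * (C r * X 1 + C s * X 2) * pderiv 0 f
  + X 1 * (C (-r) * X 0 + C t * X 2) * pderiv 1 f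
  + X 2 * (C (-s) * X 0 + C (-t) * X 1) * pderiv 2 f

lemma coeff_X_mul_zero (s : Fin 3) (p : MvPolynomial (Fin 3) ℝ) (d : Fin 3 →₀ ℕ)
    (h : d s = 0) : coeff d (X s * p) = 0 := by
  rw [coeff_X_mul']
  simp [Finsupp.mem_support_iff, h]

theorem stmt8 (r s t : ℝ) (m : ℕ) (f : MvPolynomial (Fin 3) ℝ)
    (hhom : f.IsHomogeneous m) (α β γ : ℝ)
    (hD : LV r s t f = (C α * X 0 + C β * X 1 + C γ * X 2) * f)
    (hγ : γ ≠ 0) :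
    f.coeff (Finsupp.single 2 m) = 0
    ∧ ∃ φ ψ : MvPolynomial (Fin 3) ℝ, f = X 0 * φ + X 1 * ψ := by
  set μ : Fin 3 →₀ ℕ := Finsupp.single 2 (m + 1) with hμ
  have hμ0 : μ 0 = 0 := by simp [hμ, Finsupp.single_apply]
  have hμ1 : μ 1 = 0 := by simp [hμ, Finsupp.single_apply]
  have hμ2 : μ 2 = m + 1 := by simp [hμ]
  have hLV : LV r s t f
      = X 0 * ((C r * X 1 + C s * X 2) * pderiv 0 f + C (-s) * (X 2 * pderiv 2 f))
        + X 1 * ((C (-r) * X 0 + C t * X 2) * pderiv 1 f + C (-t) * (X 2 * pderiv 2 f)) := by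
    unfold LV; ring
  have hL : coeff μ (LV r s t f) = 0 := by
    rw [hLV, coeff_add, coeff_X_mul_zero 0 _ μ hμ0, coeff_X_mul_zero 1 _ μ hμ1, add_zero]
  have hR : coeff μ ((C α * X 0 + C β * X 1 + C γ * X 2) * f)
      = γ * coeff (Finsupp.single 2 m) f := by
    have e0 : C α * X 0 * f = X (0 : Fin 3) * (C α * f) := by ring
    have e1 : C β * X 1 * f = X (1 : Fin 3) * (C β * f) := by ring
    have e2 : C γ * X 2 * f = X (2 : Fin 3) * (C γ * f) := by ring
    rw [add_mul, add_mul, coeff_add, coeff_add, e0, e1, e2,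
      coeff_X_mul_zero 0 _ μ hμ0, coeff_X_mul_zero 1 _ μ hμ1, zero_add, zero_add,
      coeff_X_mul', if_pos]
    · rw [coeff_C_mul]
      have : μ - Finsupp.single 2 1 = Finsupp.single 2 m := by
        ext i
        simp only [Finsupp.sub_apply, hμ, Finsupp.single_apply]
        split <;> simp_all
      rw [this]
    · simp [Finsupp.mem_support_iff, hμ2]
  have hc : f.coeff (Finsupp.single 2 m) = 0 := by
    have := hL.symm.trans (by rw [hD, hR])
    field_simp at this
    exact (mul_eq_zero.mp this.symm).resolve_left hγ
  refine ⟨hc, ?_⟩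
  have hmem : f ∈ Ideal.span (MvPolynomial.X '' ({0, 1} : Set (Fin 3)) :
      Set (MvPolynomial (Fin 3) ℝ)) := by
    rw [mem_ideal_span_X_image]
    intro d hd
    by_contra h
    push_neg at h
    have h0 : d 0 = 0 := by simpa using h 0 (by simp)
    have h1 : d 1 = 0 := by simpa using h 1 (by simp)
    have hdm : d = Finsupp.single 2 m := by
      have hdeg := hhom (mem_support_iff.mp hd)
      ext i
      fin_cases i
      · simpa using h0
      · simpa using h1
      · have : d 0 + d 1 + d 2 = m := by
          rw [← hdeg]
          rw [Finsupp.weight_apply, Finsupp.sum_fintype _ _ (by simp)]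
          simp [Fin.sum_univ_three]
        simp [Finsupp.single_apply]
        omega
    exact (mem_support_iff.mp hd) (hdm ▸ hc)
  rw [Set.image_insert_eq, Set.image_singleton, Ideal.mem_span_pair] at hmem
  obtain ⟨φ, ψ, h⟩ := hmem
  exact ⟨φ, ψ, by rw [← h]; ring⟩
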